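/- arXiv:1504.07332 — 2 statements merged into one kernel-verified Lean document; each statement's English description precedes it below -/
import Mathlib

section
/- Let H be a Hilbert space, (u_j)_{j∈ℕ} an orthonormal basis of H, and T a bounded linear operator on H with T u_j = E_j u_j for real numbers E_j. Let E' ∈ ℝ, c > 0, ε₁ > 0, and let v ∈ H be a unit vector with ‖(T − E') v‖ < ε₁. Let U be the closed linear span of { u_j : |E_j − E'| ≤ c }. Then ‖π_U(v)‖² > 1 − ε₁²/c². -/
local notation "⟪" x ", " y "⟫" => @inner ℂ _ _ x y

lemma coeff_eig {H : Type*} [NormedAddCommGroup H] [InnerProductSpace ℂ H] [CompleteSpace H]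
    (T : H →L[ℂ] H) (u : ℕ → H) (E : ℕ → ℝ)
    (hON : Orthonormal ℂ u)
    (hcomplete : (Submodule.span ℂ (Set.range u)).topologicalClosure = ⊤)
    (hEig : ∀ j, T (u j) = (E j : ℂ) • u j) (v : H) (i : ℕ) :
    ⟪u i, T v⟫ = (E i : ℂ) * ⟪u i, v⟫ := by
  let b : HilbertBasis ℕ ℂ H := HilbertBasis.mk hON hcomplete.ge
  have hb : ⇑b = u := HilbertBasis.coe_mk hON hcomplete.ge
  have h1 : HasSum (fun j => ⟪u j, v⟫ • u j) v := by
    have h1 := b.hasSum_repr v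
    have heq : (fun i => b.repr v i • b i) = (fun j => ⟪u j, v⟫ • u j) := by
      funext i
      have hbi := congrFun hb i
      beta_reduce at hbi
      rw [b.repr_apply_apply]
      beta_reduce
      rw [hbi]
    rwa [heq] at h1
  have h2 : HasSum (fun j => ⟪u j, v⟫ • ((E j : ℂ) • u j)) (T v) := by
    have := h1.mapL T
    simpa [hEig] using this
  have h3 : HasSum (fun j => ⟪u j, v⟫ * ((E j : ℂ) * ⟪u i, u j⟫)) ⟪u i, T v⟫ := by
    have := h2.mapL (innerSL ℂ (u i))
    simpa [inner_smul_right] using this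
  have h4 : HasSum (fun j => if j = i then (E i : ℂ) * ⟪u i, v⟫ else 0)
      ((E i : ℂ) * ⟪u i, v⟫) := hasSum_ite_eq i _
  have heq : (fun j => ⟪u j, v⟫ * ((E j : ℂ) * ⟪u i, u j⟫)) =
      fun j => if j = i then (E i : ℂ) * ⟪u i, v⟫ else 0 := by
    funext j
    rcases eq_or_ne j i with rfl | hj
    · rw [orthonormal_iff_ite.mp hON j j]
      simp [mul_comm]
    · rw [orthonormal_iff_ite.mp hON i j]
      simp [hj, Ne.symm hj]
  rw [heq] at h3
  exact h3.unique h4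

lemma parseval_real {H : Type*} [NormedAddCommGroup H] [InnerProductSpace ℂ H] [CompleteSpace H]
    (u : ℕ → H) (hON : Orthonormal ℂ u)
    (hcomplete : (Submodule.span ℂ (Set.range u)).topologicalClosure = ⊤) (y : H) :
    HasSum (fun i => ‖⟪u i, y⟫‖ ^ 2) (‖y‖ ^ 2) := by
  let b : HilbertBasis ℕ ℂ H := HilbertBasis.mk hON hcomplete.ge
  have hb : ⇑b = u := HilbertBasis.coe_mk hON hcomplete.ge
  have h1 : HasSum (fun i => ⟪y, u i⟫ * ⟪u i, y⟫) ⟪y, y⟫ := by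
    have h1 := b.hasSum_inner_mul_inner y y
    have heq : (fun i => ⟪y, b i⟫ * ⟪b i, y⟫) = (fun i => ⟪y, u i⟫ * ⟪u i, y⟫) := by
      funext i
      have hbi := congrFun hb i
      beta_reduce at hbi
      beta_reduce
      rw [hbi]
    rwa [heq] at h1
  have h2 : (fun i => ⟪y, u i⟫ * ⟪u i, y⟫) = fun i => ((‖⟪u i, y⟫‖ ^ 2 : ℝ) : ℂ) := by
    funext i
    rw [← inner_conj_symm (u i) y, RCLike.mul_conj, RCLike.norm_conj]
    norm_cast
  rw [h2, inner_self_eq_norm_sq_to_K (𝕜 := ℂ)] at h1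
  have h1' : HasSum (fun i => ((‖⟪u i, y⟫‖ ^ 2 : ℝ) : ℂ)) (((‖y‖ ^ 2 : ℝ) : ℂ)) := by
    convert h1 using 2
    norm_cast
  exact Complex.hasSum_ofReal.mp h1'

/-- Let `(u_j)` be an orthonormal basis of a Hilbert space `H` and `T` a bounded
operator with `T u_j = E_j u_j`. If `v` is a unit vector with `‖(T − E')v‖ < ε₁` and `U` is
the closed linear span of `{u_j : |E_j − E'| ≤ c}` with `c > 0`, then
`‖π_U v‖² > 1 − ε₁²/c²`. -/
theorem stmt1 {H : Type*} [NormedAddCommGroup H] [InnerProductSpace ℂ H] [CompleteSpace H]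
    (T : H →L[ℂ] H) (u : ℕ → H) (E : ℕ → ℝ)
    (hON : Orthonormal ℂ u)
    (hcomplete : (Submodule.span ℂ (Set.range u)).topologicalClosure = ⊤)
    (hEig : ∀ j, T (u j) = (E j : ℂ) • u j)
    (E' c ε₁ : ℝ) (hc : 0 < c) (hε₁ : 0 < ε₁)
    (v : H) (hv : ‖v‖ = 1) (hquasi : ‖T v - (E' : ℂ) • v‖ < ε₁) :
    1 - ε₁ ^ 2 / c ^ 2 <
      ‖(Submodule.orthogonalProjection
          (Submodule.span ℂ (u '' {j : ℕ | |E j - E'| ≤ c})).topologicalClosure v : H)‖ ^ 2 := by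
  set U := (Submodule.span ℂ (u '' {j : ℕ | |E j - E'| ≤ c})).topologicalClosure with hU
  set p : H := (Submodule.orthogonalProjection U v : H) with hp
  set q : H := (Submodule.orthogonalProjection Uᗮ v : H) with hq
  set x : H := T v - (E' : ℂ) • v with hxdef
  have hpq : p + q = v := Submodule.starProjection_add_starProjection_orthogonal (K := U) v
  have hnorm : ‖v‖ ^ 2 = ‖p‖ ^ 2 + ‖q‖ ^ 2 := Submodule.norm_sq_eq_add_norm_sq_projection v U
  have hgood : ∀ i, |E i - E'| ≤ c → ⟪u i, q⟫ = 0 := by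
    intro i hi
    have hqm : q ∈ Uᗮ := (Submodule.orthogonalProjection Uᗮ v).2
    have hui : u i ∈ U :=
      Submodule.le_topologicalClosure _ (Submodule.subset_span ⟨i, hi, rfl⟩)
    exact (Submodule.mem_orthogonal _ _).mp hqm (u i) hui
  have hbad : ∀ i, ¬(|E i - E'| ≤ c) → ⟪u i, p⟫ = 0 := by
    intro i hi
    have hpm : p ∈ U := (Submodule.orthogonalProjection U v).2
    have hker : U ≤ LinearMap.ker (innerSL ℂ (u i) : H →ₗ[ℂ] ℂ) := by
      apply Submodule.topologicalClosure_minimal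
      · rw [Submodule.span_le]
        rintro z ⟨j, hj, rfl⟩
        have hij : i ≠ j := by
          rintro rfl; exact hi hj
        simp only [SetLike.mem_coe, LinearMap.mem_ker, ContinuousLinearMap.coe_coe,
          innerSL_apply_apply]
        rw [orthonormal_iff_ite.mp hON i j]
        simp [hij]
      · exact ContinuousLinearMap.isClosed_ker (innerSL ℂ (u i))
    have := hker hpm
    simpa using this
  have hx : ∀ i, ⟪u i, x⟫ = ((E i : ℂ) - E') * ⟪u i, v⟫ := by
    intro i
    rw [hxdef, inner_sub_right, inner_smul_right, coeff_eig T u E hON hcomplete hEig v i]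
    ring
  have hA : HasSum (fun i => ‖⟪u i, v⟫‖ ^ 2) 1 := by
    have := parseval_real u hON hcomplete v
    rwa [hv, one_pow] at this
  have hQ := parseval_real u hON hcomplete q
  have hX := parseval_real u hON hcomplete x
  have key : ∀ i, c ^ 2 * ‖⟪u i, q⟫‖ ^ 2 ≤ ‖⟪u i, x⟫‖ ^ 2 := by
    intro i
    by_cases hi : |E i - E'| ≤ c
    · rw [hgood i hi]
      simp
      try positivity
    · have hqv : ⟪u i, q⟫ = ⟪u i, v⟫ := by
        rw [← hpq, inner_add_right, hbad i hi, zero_add]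
      rw [hqv, hx i, norm_mul, mul_pow]
      have h1 : c ≤ ‖((E i : ℂ) - E')‖ := by
        push_neg at hi
        calc c ≤ |E i - E'| := le_of_lt hi
        _ = ‖((E i - E' : ℝ) : ℂ)‖ := by rw [Complex.norm_real, Real.norm_eq_abs]
        _ = ‖((E i : ℂ) - E')‖ := by push_cast; ring_nf
      have h2 : (0:ℝ) ≤ ‖⟪u i, v⟫‖ ^ 2 := by positivity
      have h3 : c ^ 2 ≤ ‖((E i : ℂ) - E')‖ ^ 2 := by nlinarith [norm_nonneg ((E i : ℂ) - E')]
      exact mul_le_mul_of_nonneg_right h3 h2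
  have hsum : c ^ 2 * ‖q‖ ^ 2 ≤ ‖x‖ ^ 2 :=
    hasSum_le key (hQ.mul_left (c ^ 2)) hX
  have hxe : ‖x‖ ^ 2 < ε₁ ^ 2 := by
    have := norm_nonneg x
    nlinarith
  have hq2 : c ^ 2 * ‖q‖ ^ 2 < ε₁ ^ 2 := lt_of_le_of_lt hsum hxe
  have hq3 : ‖q‖ ^ 2 < ε₁ ^ 2 / c ^ 2 := by
    rw [lt_div_iff₀ (by positivity)]
    linarith [hq2, mul_comm (c ^ 2) (‖q‖ ^ 2)]
  rw [hv, one_pow] at hnorm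
  linarith
end

section
/- Let S ⊆ ℕ have positive upper density, let δ > 0, and for each n ∈ S let B_n ⊆ (0, 2] be a Lebesgue measurable set with measure m(B_n) > δ. Then there exists t ∈ (0, 2] such that the set { n ∈ S : t ∈ B_n } has positive upper density; in particular, it is infinite. -/
open MeasureTheory Filter
open scoped ENNReal

open Classical in
private noncomputable def st8cnt (S : Set ℕ) (B : ℕ → Set ℝ) (n : ℕ) (t : ℝ) : ℕ :=
  ((Finset.range (n+1)).filter (fun k => k ∈ S ∧ t ∈ B k)).card

open Classical in
private noncomputable def st8cntS (S : Set ℕ) (n : ℕ) : ℕ :=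
  ((Finset.range (n+1)).filter (fun k => k ∈ S)).card

open Classical in
private lemma st8_ncard (P : ℕ → Prop) (n : ℕ) :
    {k | k ≤ n ∧ P k}.ncard = ((Finset.range (n+1)).filter P).card := by
  rw [show {k | k ≤ n ∧ P k} = ↑((Finset.range (n+1)).filter P) by
    ext k; simp [Nat.lt_succ_iff]]
  exact Set.ncard_coe_finset _

open Classical in
private lemma st8cnt_eq (S : Set ℕ) (B : ℕ → Set ℝ) (n : ℕ) (t : ℝ) :
    {k | k ≤ n ∧ k ∈ S ∧ t ∈ B k}.ncard = st8cnt S B n t := by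
  rw [st8cnt, st8_ncard]
  congr!

open Classical in
private lemma st8cntS_eq (S : Set ℕ) (n : ℕ) :
    {k | k ≤ n ∧ k ∈ S}.ncard = st8cntS S n := by
  rw [st8cntS, st8_ncard]

open Classical in
private lemma st8_eq_sum (S : Set ℕ) (B : ℕ → Set ℝ) (n : ℕ) (t : ℝ) :
    ((st8cnt S B n t : ℝ≥0∞)) =
      ∑ k ∈ Finset.range (n+1), (if k ∈ S ∧ t ∈ B k then (1:ℝ≥0∞) else 0) := by
  rw [st8cnt, Finset.card_filter]
  push_cast
  exact Finset.sum_congr rfl fun k _ => by split <;> simp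

private lemma st8_meas (S : Set ℕ) (B : ℕ → Set ℝ)
    (hBmeas : ∀ n ∈ S, MeasurableSet (B n)) (n : ℕ) :
    Measurable (fun t => (st8cnt S B n t : ℝ≥0∞)) := by
  classical
  simp only [st8_eq_sum]
  apply Finset.measurable_sum
  intro k _
  by_cases hk : k ∈ S
  · have : (fun t => if k ∈ S ∧ t ∈ B k then (1:ℝ≥0∞) else 0)
        = (B k).indicator (fun _ => 1) := by
      ext t; simp [Set.indicator_apply, hk]
    rw [this]
    exact measurable_const.indicator (hBmeas k hk)
  · have : (fun t => if k ∈ S ∧ t ∈ B k then (1:ℝ≥0∞) else 0) = fun _ => 0 := by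
      ext t; simp [hk]
    rw [this]; exact measurable_const

open Classical in
private lemma st8_int (S : Set ℕ) (B : ℕ → Set ℝ) (δ : ℝ)
    (hBmeas : ∀ n ∈ S, MeasurableSet (B n))
    (hBvol : ∀ n ∈ S, ENNReal.ofReal δ < volume (B n)) (n : ℕ) :
    ENNReal.ofReal δ * (st8cntS S n : ℝ≥0∞) ≤ ∫⁻ t, (st8cnt S B n t : ℝ≥0∞) := by
  have hmeas : ∀ k ∈ Finset.range (n+1),
      Measurable (fun t => if k ∈ S ∧ t ∈ B k then (1:ℝ≥0∞) else 0) := by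
    intro k _
    by_cases hk : k ∈ S
    · have : (fun t => if k ∈ S ∧ t ∈ B k then (1:ℝ≥0∞) else 0)
          = (B k).indicator (fun _ => 1) := by
        ext t; simp [Set.indicator_apply, hk]
      rw [this]; exact measurable_const.indicator (hBmeas k hk)
    · have : (fun t => if k ∈ S ∧ t ∈ B k then (1:ℝ≥0∞) else 0) = fun _ => 0 := by
        ext t; simp [hk]
      rw [this]; exact measurable_const
  calc ENNReal.ofReal δ * (st8cntS S n : ℝ≥0∞)
      = ∑ k ∈ Finset.range (n+1), (if k ∈ S then ENNReal.ofReal δ else 0) := by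
        rw [← Finset.sum_filter, Finset.sum_const, st8cntS, nsmul_eq_mul, mul_comm]
    _ ≤ ∑ k ∈ Finset.range (n+1), (if k ∈ S then volume (B k) else 0) := by
        apply Finset.sum_le_sum; intro k _
        by_cases hk : k ∈ S <;> simp [hk]
        exact (hBvol k hk).le
    _ = ∑ k ∈ Finset.range (n+1), ∫⁻ t, (if k ∈ S ∧ t ∈ B k then (1:ℝ≥0∞) else 0) := by
        apply Finset.sum_congr rfl; intro k _
        by_cases hk : k ∈ S
        · simp only [hk, if_true, true_and]
          rw [show (fun t => if t ∈ B k then (1:ℝ≥0∞) else 0)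
              = (B k).indicator (fun _ => 1) by ext t; simp [Set.indicator_apply]]
          rw [lintegral_indicator (hBmeas k hk)]
          simp
        · simp [hk]
    _ = ∫⁻ t, ∑ k ∈ Finset.range (n+1), (if k ∈ S ∧ t ∈ B k then (1:ℝ≥0∞) else 0) :=
        (lintegral_finset_sum _ hmeas).symm
    _ = ∫⁻ t, (st8cnt S B n t : ℝ≥0∞) := by simp_rw [← st8_eq_sum]

open Classical in
private lemma st8_markov (S : Set ℕ) (B : ℕ → Set ℝ) (δ d ε : ℝ)
    (hδ : 0 < δ) (hd : 0 < d) (hε : ε = δ * d / 8)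
    (hBmeas : ∀ n ∈ S, MeasurableSet (B n))
    (hBsub : ∀ n ∈ S, B n ⊆ Set.Ioc 0 2)
    (hBvol : ∀ n ∈ S, ENNReal.ofReal δ < volume (B n))
    (n : ℕ) (hn : 1 ≤ n) (hcnt : d / 2 * n ≤ (st8cntS S n : ℝ)) :
    ENNReal.ofReal (δ/2) ≤
      volume (Set.Ioc (0:ℝ) 2 ∩ {t | ENNReal.ofReal (ε*n) ≤ (st8cnt S B n t : ℝ≥0∞)}) := by
  set E := Set.Ioc (0:ℝ) 2 ∩ {t | ENNReal.ofReal (ε*n) ≤ (st8cnt S B n t : ℝ≥0∞)} with hE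
  have hEmeas : MeasurableSet E :=
    measurableSet_Ioc.inter (measurableSet_le measurable_const (st8_meas S B hBmeas n))
  have hcnt0 : (0:ℝ) < (st8cntS S n : ℝ) := lt_of_lt_of_le (by positivity) hcnt
  have hcm0 : (st8cntS S n : ℝ≥0∞) ≠ 0 := by
    exact_mod_cast Nat.cast_ne_zero.mpr (by exact_mod_cast hcnt0.ne')
  by_contra hle
  push_neg at hle
  have hgle : ∀ t, (st8cnt S B n t : ℝ≥0∞) ≤
      E.indicator (fun _ => (st8cntS S n : ℝ≥0∞)) t
        + (Set.Ioc (0:ℝ) 2).indicator (fun _ => ENNReal.ofReal (ε*n)) t := by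
    intro t
    by_cases htI : t ∈ Set.Ioc (0:ℝ) 2
    · by_cases htE : t ∈ E
      · have h1 : st8cnt S B n t ≤ st8cntS S n := by
          apply Finset.card_le_card
          intro k hk
          simp only [st8cnt, Finset.mem_filter] at hk
          simp only [st8cntS, Finset.mem_filter]
          exact ⟨hk.1, hk.2.1⟩
        calc (st8cnt S B n t : ℝ≥0∞) ≤ (st8cntS S n : ℝ≥0∞) := by exact_mod_cast h1
          _ ≤ _ := by rw [Set.indicator_of_mem htE]; exact le_self_add
      · have h2 : (st8cnt S B n t : ℝ≥0∞) ≤ ENNReal.ofReal (ε*n) := by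
          have : ¬ ENNReal.ofReal (ε*n) ≤ (st8cnt S B n t : ℝ≥0∞) := by
            intro h; exact htE ⟨htI, h⟩
          exact (lt_of_not_ge this).le
        calc (st8cnt S B n t : ℝ≥0∞) ≤ ENNReal.ofReal (ε*n) := h2
          _ ≤ _ := by rw [Set.indicator_of_mem htI]; exact le_add_self
    · have : st8cnt S B n t = 0 := by
        rw [st8cnt, Finset.card_eq_zero, Finset.filter_eq_empty_iff]
        intro k _ hk
        exact htI (hBsub k hk.1 hk.2)
      simp [this]
  have hint : ∫⁻ t, (st8cnt S B n t : ℝ≥0∞) ≤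
      (st8cntS S n : ℝ≥0∞) * volume E + ENNReal.ofReal (ε*n) * 2 := by
    calc ∫⁻ t, (st8cnt S B n t : ℝ≥0∞)
        ≤ ∫⁻ t, (E.indicator (fun _ => (st8cntS S n : ℝ≥0∞)) t
            + (Set.Ioc (0:ℝ) 2).indicator (fun _ => ENNReal.ofReal (ε*n)) t) :=
          lintegral_mono hgle
      _ = (st8cntS S n : ℝ≥0∞) * volume E + ENNReal.ofReal (ε*n) * 2 := by
          rw [lintegral_add_left (measurable_const.indicator hEmeas),
            lintegral_indicator hEmeas, lintegral_indicator measurableSet_Ioc,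
            setLIntegral_const, setLIntegral_const, Real.volume_Ioc]
          norm_num
  have hchain : ENNReal.ofReal δ * (st8cntS S n : ℝ≥0∞) ≤
      (st8cntS S n : ℝ≥0∞) * volume E + ENNReal.ofReal (ε*n) * 2 :=
    le_trans (st8_int S B δ hBmeas hBvol n) hint
  have hmul : (st8cntS S n : ℝ≥0∞) * volume E
      < (st8cntS S n : ℝ≥0∞) * ENNReal.ofReal (δ/2) :=
    (ENNReal.mul_lt_mul_iff_right hcm0 (ENNReal.natCast_ne_top _)).mpr hle
  have hreal : ε * n * 2 ≤ δ/2 * (st8cntS S n : ℝ) := by nlinarith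
  have hofr : ENNReal.ofReal (ε*n) * 2 ≤ ENNReal.ofReal (δ/2) * (st8cntS S n : ℝ≥0∞) := by
    have hε0 : (0:ℝ) ≤ ε := by rw [hε]; positivity
    calc ENNReal.ofReal (ε*n) * 2 = ENNReal.ofReal (ε*n*2) := by
          rw [← ENNReal.ofReal_ofNat 2,
            ← ENNReal.ofReal_mul (mul_nonneg hε0 (Nat.cast_nonneg n))]
      _ ≤ ENNReal.ofReal (δ/2 * (st8cntS S n : ℝ)) := ENNReal.ofReal_le_ofReal hreal
      _ = ENNReal.ofReal (δ/2) * (st8cntS S n : ℝ≥0∞) := by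
          rw [ENNReal.ofReal_mul (by linarith : (0:ℝ) ≤ δ/2), ENNReal.ofReal_natCast]
  have hsum : (st8cntS S n : ℝ≥0∞) * volume E + ENNReal.ofReal (ε*n) * 2
      < ENNReal.ofReal δ * (st8cntS S n : ℝ≥0∞) := by
    calc (st8cntS S n : ℝ≥0∞) * volume E + ENNReal.ofReal (ε*n) * 2
        < (st8cntS S n : ℝ≥0∞) * ENNReal.ofReal (δ/2) + ENNReal.ofReal (ε*n) * 2 :=
          ENNReal.add_lt_add_right (by simp [ENNReal.mul_eq_top]) hmul
      _ ≤ (st8cntS S n : ℝ≥0∞) * ENNReal.ofReal (δ/2)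
            + ENNReal.ofReal (δ/2) * (st8cntS S n : ℝ≥0∞) := add_le_add_right hofr _
      _ = (ENNReal.ofReal (δ/2) + ENNReal.ofReal (δ/2)) * (st8cntS S n : ℝ≥0∞) := by
          ring
      _ = ENNReal.ofReal δ * (st8cntS S n : ℝ≥0∞) := by
          rw [← ENNReal.ofReal_add (by linarith : (0:ℝ) ≤ δ/2) (by linarith : (0:ℝ) ≤ δ/2)]
          norm_num
  exact absurd hchain (not_le.mpr hsum)

/-- Let `S ⊆ ℕ` have positive upper density, `δ > 0`, and for each `n ∈ S`
let `B n ⊆ (0,2]` be Lebesgue measurable with `m(B n) > δ`. Then there exists `t ∈ (0,2]`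
such that `{n ∈ S : t ∈ B n}` has positive upper density; in particular it is infinite. -/
theorem stmt8 (S : Set ℕ)
    (hS : 0 < limsup (fun n : ℕ => ({k | k ≤ n ∧ k ∈ S}.ncard : ℝ) / n) atTop)
    (δ : ℝ) (hδ : 0 < δ) (B : ℕ → Set ℝ)
    (hBmeas : ∀ n ∈ S, MeasurableSet (B n))
    (hBsub : ∀ n ∈ S, B n ⊆ Set.Ioc 0 2)
    (hBvol : ∀ n ∈ S, ENNReal.ofReal δ < volume (B n)) :
    ∃ t ∈ Set.Ioc (0 : ℝ) 2,
      0 < limsup (fun n : ℕ => ({k | k ≤ n ∧ k ∈ S ∧ t ∈ B k}.ncard : ℝ) / n) atTop ∧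
      {n ∈ S | t ∈ B n}.Infinite := by
  classical
  set d := limsup (fun n : ℕ => ({k | k ≤ n ∧ k ∈ S}.ncard : ℝ) / n) atTop with hd
  set ε := δ * d / 8 with hεdef
  have hε0 : 0 < ε := by rw [hεdef]; exact div_pos (mul_pos hδ hS) (by norm_num)
  have hfreq : ∀ N : ℕ, ∃ n, N ≤ n ∧ 1 ≤ n ∧ d / 2 * n ≤ (st8cntS S n : ℝ) := by
    intro N
    have hb : IsBoundedUnder (· ≥ ·) atTop
        (fun n : ℕ => ({k | k ≤ n ∧ k ∈ S}.ncard : ℝ) / n) :=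
      isBoundedUnder_of ⟨0, fun n =>
        div_nonneg (Nat.cast_nonneg _) (Nat.cast_nonneg _)⟩
    have hfr := frequently_lt_of_lt_limsup hb.isCoboundedUnder_le
      (show d / 2 < d by linarith)
    obtain ⟨n, hP, hnN⟩ := (hfr.and_eventually (eventually_ge_atTop (max N 1))).exists
    have hn1 : 1 ≤ n := le_trans (le_max_right N 1) hnN
    have hnpos : (0:ℝ) < n := by exact_mod_cast hn1
    refine ⟨n, le_trans (le_max_left N 1) hnN, hn1, ?_⟩
    rw [st8cntS_eq S n, lt_div_iff₀ hnpos] at hP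
    linarith
  set Eset : ℕ → Set ℝ := fun n =>
    Set.Ioc (0:ℝ) 2 ∩ {t | ENNReal.ofReal (ε*n) ≤ (st8cnt S B n t : ℝ≥0∞)} with hEdef
  have hEm : ∀ n, MeasurableSet (Eset n) := fun n =>
    measurableSet_Ioc.inter (measurableSet_le measurable_const (st8_meas S B hBmeas n))
  set A : ℕ → Set ℝ := fun N => ⋃ n ∈ Set.Ici (N+1), Eset n with hAdef
  have hAm : ∀ N, MeasurableSet (A N) := fun N =>
    MeasurableSet.biUnion (Set.to_countable _) (fun n _ => hEm n)
  have hAanti : Antitone A := fun N M h =>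
    Set.biUnion_subset_biUnion_left (Set.Ici_subset_Ici.mpr (by omega))
  have hAsub : ∀ N, A N ⊆ Set.Ioc (0:ℝ) 2 := fun N =>
    Set.iUnion₂_subset fun n _ => Set.inter_subset_left
  have hAvol : ∀ N, ENNReal.ofReal (δ/2) ≤ volume (A N) := by
    intro N
    obtain ⟨n, hnN, hn1, hc⟩ := hfreq (N+1)
    have hsub : Eset n ⊆ A N :=
      Set.subset_biUnion_of_mem (show n ∈ Set.Ici (N+1) from hnN)
    exact le_trans (st8_markov S B δ d ε hδ hS hεdef hBmeas hBsub hBvol n hn1 hc)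
      (measure_mono hsub)
  have hAfin : volume (A 0) ≠ ⊤ :=
    ne_top_of_le_ne_top (by simp [Real.volume_Ioc]) (measure_mono (hAsub 0))
  have htend := tendsto_measure_iInter_atTop (fun N => (hAm N).nullMeasurableSet) hAanti ⟨0, hAfin⟩
  have hIvol : ENNReal.ofReal (δ/2) ≤ volume (⋂ N, A N) :=
    ge_of_tendsto htend (Eventually.of_forall hAvol)
  have hIpos : volume (⋂ N, A N) ≠ 0 :=
    (lt_of_lt_of_le (ENNReal.ofReal_pos.mpr (half_pos hδ)) hIvol).ne'
  obtain ⟨t, ht⟩ := nonempty_of_measure_ne_zero hIpos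
  have hmem : ∀ N, t ∈ A N := Set.mem_iInter.mp ht
  have htI : t ∈ Set.Ioc (0:ℝ) 2 := hAsub 0 (hmem 0)
  have hbnd : ∀ n : ℕ, ({k | k ≤ n ∧ k ∈ S ∧ t ∈ B k}.ncard : ℝ) / n ≤ 2 := by
    intro n
    rcases Nat.eq_zero_or_pos n with h0 | hpos
    · simp [h0]
    · have h1 : st8cnt S B n t ≤ n + 1 := by
        calc st8cnt S B n t ≤ (Finset.range (n+1)).card := Finset.card_filter_le _ _
          _ = n + 1 := Finset.card_range _
      have hnpos : (0:ℝ) < n := by exact_mod_cast hpos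
      rw [st8cnt_eq S B n t, div_le_iff₀ hnpos]
      have h3 : (st8cnt S B n t : ℝ) ≤ n + 1 := by exact_mod_cast h1
      have h2 : (1:ℝ) ≤ n := by exact_mod_cast hpos
      linarith
  have ha_freq : ∃ᶠ n in atTop,
      ε ≤ ({k | k ≤ n ∧ k ∈ S ∧ t ∈ B k}.ncard : ℝ) / n := by
    rw [frequently_atTop]
    intro N
    obtain ⟨n, hn, htE⟩ := Set.mem_iUnion₂.mp (hmem N)
    have hn' : N + 1 ≤ n := hn
    have hnpos : (0:ℝ) < n := by exact_mod_cast (by omega : 1 ≤ n)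
    refine ⟨n, by omega, ?_⟩
    have h2 : ENNReal.ofReal (ε*n) ≤ (st8cnt S B n t : ℝ≥0∞) := htE.2
    rw [← ENNReal.ofReal_natCast] at h2
    have h1 : ε * n ≤ (st8cnt S B n t : ℝ) :=
      (ENNReal.ofReal_le_ofReal_iff (Nat.cast_nonneg _)).mp h2
    rw [st8cnt_eq S B n t, le_div_iff₀ hnpos]
    linarith
  have hlims : ε ≤ limsup
      (fun n : ℕ => ({k | k ≤ n ∧ k ∈ S ∧ t ∈ B k}.ncard : ℝ) / n) atTop :=
    le_limsup_of_frequently_le ha_freq (isBoundedUnder_of ⟨2, hbnd⟩)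
  have hpos : 0 < limsup
      (fun n : ℕ => ({k | k ≤ n ∧ k ∈ S ∧ t ∈ B k}.ncard : ℝ) / n) atTop :=
    lt_of_lt_of_le hε0 hlims
  refine ⟨t, htI, hpos, ?_⟩
  intro hfin
  have hle : ∀ n : ℕ, ({k | k ≤ n ∧ k ∈ S ∧ t ∈ B k}.ncard : ℝ) / n ≤
      (({n ∈ S | t ∈ B n}.ncard : ℝ)) / n := by
    intro n
    have h : {k | k ≤ n ∧ k ∈ S ∧ t ∈ B k}.ncard ≤ {n ∈ S | t ∈ B n}.ncard :=
      Set.ncard_le_ncard (fun k hk => ⟨hk.2.1, hk.2.2⟩) hfin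
    exact div_le_div_of_nonneg_right (by exact_mod_cast h) (Nat.cast_nonneg n)
  have htz : Tendsto (fun n : ℕ => ({k | k ≤ n ∧ k ∈ S ∧ t ∈ B k}.ncard : ℝ) / n)
      atTop (nhds 0) := by
    apply squeeze_zero (fun n => div_nonneg (Nat.cast_nonneg _) (Nat.cast_nonneg _)) hle
    exact tendsto_const_div_atTop_nhds_zero_nat _
  rw [htz.limsup_eq] at hpos
  exact lt_irrefl _ hpos
end
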